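/- Let H be a separable infinite-dimensional complex Hilbert space and let 𝒯 ⊆ B₁ be a family of operators of norm at most 1. Suppose there exist an orthonormal basis {e_n}_{n=1}^∞ of H and a number K ∈ ℕ such that for every N ∈ ℕ, every T ∈ 𝒯, and every h in the closed linear span of {e_{N+K}, e_{N+K+1}, …}, the vector T h is orthogonal to span{e₁,…,e_N}. Then 𝒯, viewed as a family of maps H₁ → H₁, is UEC for the weak uniformity. -/

import Mathlib

open scoped InnerProductSpace

/-- A family of maps `F k : H → H` (viewed as maps of the closed unit ball `H₁` to itself)
is *uniformly equicontinuous (UEC) for the weak uniformity* if for every `ε > 0` and all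
vectors `x₁, …, x_N ∈ H₁` there exist `δ > 0` and vectors `w₁, …, w_M ∈ H₁` such that for
all `ξ, η ∈ H₁` with `|⟪ξ - η, w_j⟫| < δ` for all `j`, and every member of the family,
`|⟪F k ξ - F k η, x_i⟫| < ε` for all `i`. -/
def UECweak {H : Type*} [NormedAddCommGroup H] [InnerProductSpace ℂ H]
    {ι : Type*} (F : ι → H → H) : Prop :=
  ∀ ε : ℝ, 0 < ε → ∀ (N : ℕ) (x : Fin N → H), (∀ i, ‖x i‖ ≤ 1) →
    ∃ (δ : ℝ) (M : ℕ) (w : Fin M → H), 0 < δ ∧ (∀ j, ‖w j‖ ≤ 1) ∧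
      ∀ ξ η : H, ‖ξ‖ ≤ 1 → ‖η‖ ≤ 1 →
        (∀ j, ‖⟪ξ - η, w j⟫_ℂ‖ < δ) →
        ∀ (k : ι) (i : Fin N), ‖⟪F k ξ - F k η, x i⟫_ℂ‖ < ε

theorem uecWeak_of_lower_triangular {H : Type*} [NormedAddCommGroup H]
    [InnerProductSpace ℂ H] [CompleteSpace H] [TopologicalSpace.SeparableSpace H]
    (hinf : ¬ FiniteDimensional ℂ H)
    (𝒯 : Set (H →L[ℂ] H)) (h𝒯 : ∀ T ∈ 𝒯, ‖T‖ ≤ 1)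
    (e : HilbertBasis ℕ ℂ H) (K : ℕ)
    (horth : ∀ N : ℕ, ∀ T ∈ 𝒯,
      ∀ h ∈ (Submodule.span ℂ (⇑e '' {i : ℕ | N + K ≤ i})).topologicalClosure,
        ∀ i < N, ⟪(T : H →L[ℂ] H) h, e i⟫_ℂ = 0) :
    UECweak (fun T : 𝒯 => fun ξ : H => (T : H →L[ℂ] H) ξ) := by
  intro ε hε N x hx
  set ε₁ : ℝ := min ε 1 with hε₁def
  have hε₁ : 0 < ε₁ := lt_min hε one_pos
  have hε₁le : ε₁ ≤ ε := min_le_left _ _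
  have hε₁le1 : ε₁ ≤ 1 := min_le_right _ _
  -- for each i, choose m_i with small tail
  have key : ∀ i : Fin N, ∃ m : ℕ,
      ‖x i - ∑ j ∈ Finset.range m, (⟪e j, x i⟫_ℂ) • e j‖ < ε₁ / 8 := by
    intro i
    have hsum : HasSum (fun j : ℕ => (⟪e j, x i⟫_ℂ) • e j) (x i) := by
      simpa [e.repr_apply_apply] using e.hasSum_repr (x i)
    have := hsum.tendsto_sum_nat
    rw [Metric.tendsto_atTop] at this
    obtain ⟨n, hn⟩ := this (ε₁ / 8) (by positivity)
    exact ⟨n, by simpa [dist_eq_norm, norm_sub_rev] using hn n le_rfl⟩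
  choose m hm using key
  set M : ℕ := (Finset.univ.sup m) + K with hMdef
  have hmK : ∀ i : Fin N, m i + K ≤ M := fun i =>
    Nat.add_le_add_right (Finset.le_sup (Finset.mem_univ i)) K
  set δ : ℝ := ε₁ / (8 * (M + 1)) with hδdef
  refine ⟨δ, M, fun j => e (j : ℕ), by positivity, fun j => le_of_eq (e.orthonormal.1 _), ?_⟩
  intro ξ η hξ hη hsmall T i
  set z : H := ξ - η with hzdef
  have hznorm : ‖z‖ ≤ 2 := by
    calc ‖z‖ ≤ ‖ξ‖ + ‖η‖ := norm_sub_le _ _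
    _ ≤ 2 := by linarith
  set Pz : H := ∑ j ∈ Finset.range M, (⟪e j, z⟫_ℂ) • e j with hPzdef
  set Qz : H := z - Pz with hQzdef
  have hTnorm : ‖(T : H →L[ℂ] H)‖ ≤ 1 := h𝒯 _ T.2
  -- bound ‖Pz‖
  have hPznorm : ‖Pz‖ < ε₁ / 8 := by
    have h1 : ‖Pz‖ ≤ ∑ j ∈ Finset.range M, ‖(⟪e j, z⟫_ℂ) • e j‖ := norm_sum_le _ _
    have h2 : ∀ j ∈ Finset.range M, ‖(⟪e j, z⟫_ℂ) • e j‖ ≤ δ := by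
      intro j hj
      rw [norm_smul]
      have hj' : j < M := Finset.mem_range.1 hj
      have := hsmall ⟨j, hj'⟩
      simp only at this
      rw [norm_inner_symm] at this
      calc ‖⟪e j, z⟫_ℂ‖ * ‖e j‖ ≤ ‖⟪e j, z⟫_ℂ‖ * 1 := by
            exact mul_le_mul_of_nonneg_left (le_of_eq (e.orthonormal.1 _)) (norm_nonneg _)
      _ ≤ δ := by rw [mul_one]; exact le_of_lt this
    have h3 : ∑ j ∈ Finset.range M, ‖(⟪e j, z⟫_ℂ) • e j‖ ≤ M * δ := by
      calc ∑ j ∈ Finset.range M, ‖(⟪e j, z⟫_ℂ) • e j‖ ≤ ∑ _j ∈ Finset.range M, δ :=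
            Finset.sum_le_sum h2
      _ = M * δ := by simp [mul_comm]
    have h4 : (M : ℝ) * δ < ε₁ / 8 := by
      rw [hδdef]
      have heq : (M:ℝ) * (ε₁ / (8 * (M + 1))) = ε₁ * M / (8 * ((M:ℝ) + 1)) := by ring
      rw [heq, div_lt_div_iff₀ (by positivity) (by norm_num)]
      nlinarith [hε₁]
    linarith
  -- Qz is in the closure of the span of the tail
  have hQmem : Qz ∈ (Submodule.span ℂ (⇑e '' {i : ℕ | M ≤ i})).topologicalClosure := by
    have hsum : HasSum (fun j : ℕ => (⟪e j, z⟫_ℂ) • e j) z := by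
      simpa [e.repr_apply_apply] using e.hasSum_repr z
    have h2 : HasSum (fun j : {j : ℕ // j ∉ Finset.range M} => (⟪e (j : ℕ), z⟫_ℂ) • e (j : ℕ))
        (z - Pz) := (Finset.hasSum_iff_compl (Finset.range M)).1 hsum
    refine (Submodule.span ℂ (⇑e '' {i : ℕ | M ≤ i})).isClosed_topologicalClosure.mem_of_tendsto
      h2 (Filter.Eventually.of_forall fun t => ?_)
    refine Submodule.sum_mem _ fun j _ => Submodule.smul_mem _ _ ?_
    refine Submodule.le_topologicalClosure _ (Submodule.subset_span ?_)
    exact ⟨(j : ℕ), by simpa using Nat.le_of_not_lt (by simpa [Finset.mem_range] using j.2), rfl⟩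
  -- T Qz is orthogonal to e j for j < m i
  have horthQ : ∀ j < m i, ⟪(T : H →L[ℂ] H) Qz, e j⟫_ℂ = 0 := by
    intro j hj
    refine horth (m i) T T.2 Qz ?_ j hj
    refine Submodule.topologicalClosure_mono (Submodule.span_mono (Set.image_mono ?_)) hQmem
    intro a ha
    exact le_trans (hmK i) ha
  set Px : H := ∑ j ∈ Finset.range (m i), (⟪e j, x i⟫_ℂ) • e j with hPxdef
  have hzero : ⟪(T : H →L[ℂ] H) Qz, Px⟫_ℂ = 0 := by
    rw [hPxdef, inner_sum]
    refine Finset.sum_eq_zero fun j hj => ?_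
    rw [inner_smul_right, horthQ j (Finset.mem_range.1 hj), mul_zero]
  -- assemble
  have hdecomp : (T : H →L[ℂ] H) ξ - (T : H →L[ℂ] H) η
      = (T : H →L[ℂ] H) Pz + (T : H →L[ℂ] H) Qz := by
    rw [← map_sub, ← map_add]
    congr 1
    rw [hQzdef, hzdef]
    abel
  have hQnorm : ‖(T : H →L[ℂ] H) Qz‖ ≤ 3 := by
    have h1 : ‖(T : H →L[ℂ] H) Qz‖ ≤ ‖(T : H →L[ℂ] H)‖ * ‖Qz‖ :=
      ContinuousLinearMap.le_opNorm _ _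
    have h2 : ‖Qz‖ ≤ ‖z‖ + ‖Pz‖ := norm_sub_le _ _
    have h3 : ‖Qz‖ ≤ 3 := by
      have : ε₁ / 8 ≤ 1 := by linarith
      linarith
    calc ‖(T : H →L[ℂ] H) Qz‖ ≤ ‖(T : H →L[ℂ] H)‖ * ‖Qz‖ := h1
    _ ≤ 1 * 3 := mul_le_mul hTnorm h3 (norm_nonneg _) (by linarith [norm_nonneg ((T : H →L[ℂ] H) Qz), h1] )
    _ = 3 := by ring
  have hPbound : ‖⟪(T : H →L[ℂ] H) Pz, x i⟫_ℂ‖ < ε₁ / 8 := by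
    calc ‖⟪(T : H →L[ℂ] H) Pz, x i⟫_ℂ‖ ≤ ‖(T : H →L[ℂ] H) Pz‖ * ‖x i‖ := norm_inner_le_norm _ _
    _ ≤ ‖(T : H →L[ℂ] H) Pz‖ * 1 := mul_le_mul_of_nonneg_left (hx i) (norm_nonneg _)
    _ = ‖(T : H →L[ℂ] H) Pz‖ := mul_one _
    _ ≤ ‖(T : H →L[ℂ] H)‖ * ‖Pz‖ := ContinuousLinearMap.le_opNorm _ _
    _ ≤ 1 * ‖Pz‖ := mul_le_mul_of_nonneg_right hTnorm (norm_nonneg _)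
    _ = ‖Pz‖ := one_mul _
    _ < ε₁ / 8 := hPznorm
  have hQbound : ‖⟪(T : H →L[ℂ] H) Qz, x i⟫_ℂ‖ < 3 * (ε₁ / 8) := by
    have hsplit : ⟪(T : H →L[ℂ] H) Qz, x i⟫_ℂ
        = ⟪(T : H →L[ℂ] H) Qz, x i - Px⟫_ℂ + ⟪(T : H →L[ℂ] H) Qz, Px⟫_ℂ := by
      rw [← inner_add_right]; congr 1; abel
    rw [hsplit, hzero, add_zero]
    calc ‖⟪(T : H →L[ℂ] H) Qz, x i - Px⟫_ℂ‖
        ≤ ‖(T : H →L[ℂ] H) Qz‖ * ‖x i - Px‖ := norm_inner_le_norm _ _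
    _ ≤ 3 * ‖x i - Px‖ := mul_le_mul_of_nonneg_right hQnorm (norm_nonneg _)
    _ < 3 * (ε₁ / 8) := by
        have := hm i
        have h0 : (0:ℝ) < 3 := by norm_num
        exact (mul_lt_mul_iff_right₀ h0).2 (by rw [hPxdef]; exact this)
  have hfinal : ‖⟪(T : H →L[ℂ] H) ξ - (T : H →L[ℂ] H) η, x i⟫_ℂ‖ < ε := by
    rw [hdecomp]
    calc ‖⟪(T : H →L[ℂ] H) Pz + (T : H →L[ℂ] H) Qz, x i⟫_ℂ‖
        = ‖⟪(T : H →L[ℂ] H) Pz, x i⟫_ℂ + ⟪(T : H →L[ℂ] H) Qz, x i⟫_ℂ‖ := by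
          rw [inner_add_left]
    _ ≤ ‖⟪(T : H →L[ℂ] H) Pz, x i⟫_ℂ‖ + ‖⟪(T : H →L[ℂ] H) Qz, x i⟫_ℂ‖ := norm_add_le _ _
    _ < ε₁ / 8 + 3 * (ε₁ / 8) := add_lt_add hPbound hQbound
    _ ≤ ε := by linarith
  simpa using hfinal
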